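/- Let ρ be a positive definite density operator on a finite-dimensional Hilbert space and (a_j)_{j=1..m} a POVM. Define λ_j = Tr(ρ a_j) and, when λ_j > 0, ρ̂_j = (1/λ_j)·√ρ a_j √ρ. Then each ρ̂_j is a density operator, Σ_j λ_j ρ̂_j = ρ, and a_j = √(ρ⁻¹)·λ_j ρ̂_j·√(ρ⁻¹), i.e., the 'pretty good measurement' of the ensemble {ρ̂_j, λ_j} recovers (a_j). -/

import Mathlib

open scoped ComplexOrder
open Matrix

noncomputable section

/-- Von Neumann entropy (base 2) of a Hermitian matrix, via its eigenvalues. -/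
def vNE {n : Type*} [Fintype n] [DecidableEq n] (A : Matrix n n ℂ) : ℝ :=
  if h : A.IsHermitian then -∑ i, (h.eigenvalues i) * Real.logb 2 (h.eigenvalues i) else 0

/-- Holevo quantity I(s;σ) = H(Σ s_i σ_i) − Σ s_i H(σ_i). -/
def holevo {n m : Type*} [Fintype n] [DecidableEq n] [Fintype m]
    (s : m → ℝ) (σ : m → Matrix n n ℂ) : ℝ :=
  vNE (∑ i, (s i : ℂ) • σ i) - ∑ i, s i * vNE (σ i)

/-- The positive semidefinite square root of a positive semidefinite matrix
(as defined in Mathlib of December 2024; removed since). -/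
def Matrix.PosSemidef.sqrt {n : Type*} [Fintype n] [DecidableEq n] {𝕜 : Type*} [RCLike 𝕜]
    {A : Matrix n n 𝕜} (hA : A.PosSemidef) : Matrix n n 𝕜 :=
  (hA.1.eigenvectorUnitary : Matrix n n 𝕜) *
    diagonal (fun i => ((√(hA.1.eigenvalues i) : ℝ) : 𝕜)) *
    (star hA.1.eigenvectorUnitary : Matrix n n 𝕜)

section sqrtPort
open scoped MatrixOrder

lemma Matrix.PosSemidef.sqrt_eq_cfcSqrt {n : Type*} [Fintype n] [DecidableEq n]
    {A : Matrix n n ℂ} (hA : A.PosSemidef) : hA.sqrt = CFC.sqrt A := by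
  rw [CFC.sqrt_eq_cfc, cfc_nnreal_eq_real _ A, hA.1.cfc_eq]
  simp only [Matrix.PosSemidef.sqrt, IsHermitian.cfc, Unitary.conjStarAlgAut_apply]
  congr 2
  ext i
  rename_i k
  simp [diagonal_apply, max_eq_left (hA.eigenvalues_nonneg i)]

lemma Matrix.PosSemidef.posSemidef_sqrt {n : Type*} [Fintype n] [DecidableEq n]
    {A : Matrix n n ℂ} (hA : A.PosSemidef) : hA.sqrt.PosSemidef := by
  rw [hA.sqrt_eq_cfcSqrt]
  exact (CFC.sqrt_nonneg A).posSemidef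

lemma Matrix.PosSemidef.sqrt_mul_self {n : Type*} [Fintype n] [DecidableEq n]
    {A : Matrix n n ℂ} (hA : A.PosSemidef) : hA.sqrt * hA.sqrt = A := by
  rw [hA.sqrt_eq_cfcSqrt]
  exact CFC.sqrt_mul_sqrt_self A hA.nonneg

lemma Matrix.PosSemidef.eq_sqrt_of_sq_eq {n : Type*} [Fintype n] [DecidableEq n]
    {A : Matrix n n ℂ} (hA : A.PosSemidef) (B : Matrix n n ℂ) (hB : B.PosSemidef)
    (hsq : B ^ 2 = A) : B = hA.sqrt := by
  rw [hA.sqrt_eq_cfcSqrt, eq_comm]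
  exact CFC.sqrt_unique (by rw [← pow_two, hsq]) hB.nonneg

end sqrtPort

/-- trace of a PSD complex matrix is a nonneg real, and zero trace forces the matrix to be 0. -/
lemma psd_trace_aux {n : Type*} [Fintype n] [DecidableEq n] {X : Matrix n n ℂ}
    (hX : X.PosSemidef) :
    ∃ r : ℝ, 0 ≤ r ∧ X.trace = (r : ℂ) ∧ (r = 0 → X = 0) := by
  set B := hX.sqrt with hB
  have hBH : Bᴴ = B := hX.posSemidef_sqrt.1
  have hXB : X = Bᴴ * B := by rw [hBH, hX.sqrt_mul_self]
  refine ⟨∑ j, ∑ i, Complex.normSq (B i j), ?_, ?_, ?_⟩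
  · exact Finset.sum_nonneg fun j _ => Finset.sum_nonneg fun i _ => Complex.normSq_nonneg _
  · rw [hXB, Matrix.trace]
    push_cast
    congr 1; ext j
    simp only [Matrix.diag_apply, Matrix.mul_apply, Matrix.conjTranspose_apply]
    congr 1; ext i
    rw [Complex.star_def, ← Complex.normSq_eq_conj_mul_self]
  · intro hr
    have h0 : ∀ j ∈ Finset.univ, ∀ i ∈ Finset.univ, Complex.normSq (B i j) = 0 := by
      intro j _ i _
      have := (Finset.sum_eq_zero_iff_of_nonneg (fun j _ => Finset.sum_nonneg
        (fun i _ => Complex.normSq_nonneg _))).mp hr j (Finset.mem_univ j)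
      exact (Finset.sum_eq_zero_iff_of_nonneg
        (fun i _ => Complex.normSq_nonneg _)).mp this i (Finset.mem_univ i)
    have hB0 : B = 0 := by
      ext i j
      exact Complex.normSq_eq_zero.mp (h0 j (Finset.mem_univ j) i (Finset.mem_univ i))
    rw [hXB, hB0]; simp

lemma psd_smul_nonneg {n : Type*} [Fintype n] [DecidableEq n] {X : Matrix n n ℂ}
    (hX : X.PosSemidef) {c : ℝ} (hc : 0 ≤ c) : ((c : ℂ) • X).PosSemidef := by
  have hc' : (0:ℂ) ≤ (c:ℂ) := by exact_mod_cast hc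
  exact hX.smul hc'

/-- the canonical ensemble {ρ̂_j, λ_j} of a POVM (a_j) and a state ρ:
each ρ̂_j is a density operator, Σ_j λ_j ρ̂_j = ρ, and the pretty good measurement
of the ensemble recovers (a_j). -/
theorem stmt_7 {n : Type*} [Fintype n] [DecidableEq n] {m : ℕ}
    (ρ : Matrix n n ℂ) (hρ : ρ.PosDef) (hρt : ρ.trace = 1)
    (a : Fin m → Matrix n n ℂ)
    (ha : ∀ j, (a j).PosSemidef) (hsum : ∑ j, a j = 1)
    (lam : Fin m → ℝ) (hlam : ∀ j, lam j = (Matrix.trace (ρ * a j)).re)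
    (rhat : Fin m → Matrix n n ℂ)
    (hrhat : ∀ j, rhat j =
      (lam j : ℂ)⁻¹ • (hρ.posSemidef.sqrt * a j * hρ.posSemidef.sqrt)) :
    (∀ j, 0 < lam j → (rhat j).PosSemidef ∧ (rhat j).trace = 1) ∧
    (∑ j, (lam j : ℂ) • rhat j = ρ) ∧
    (∀ j, 0 < lam j →
      a j = hρ.inv.posSemidef.sqrt * ((lam j : ℂ) • rhat j) * hρ.inv.posSemidef.sqrt) := by
  set S := hρ.posSemidef.sqrt with hSdef
  have hSH : Sᴴ = S := hρ.posSemidef.posSemidef_sqrt.1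
  have hSS : S * S = ρ := hρ.posSemidef.sqrt_mul_self
  -- S a S is PSD
  have hpsd : ∀ j, (S * a j * S).PosSemidef := by
    intro j
    have := (ha j).mul_mul_conjTranspose_same S
    rwa [hSH] at this
  -- trace of S a S equals trace (ρ * a j)
  have htr : ∀ j, (S * a j * S).trace = (ρ * a j).trace := by
    intro j
    rw [Matrix.trace_mul_cycle, hSS]
  -- trace (ρ * a j) = lam j
  have hlam' : ∀ j, (ρ * (a j)).trace = ((lam j : ℝ) : ℂ) := by
    intro j
    obtain ⟨r, _, hr, _⟩ := psd_trace_aux (hpsd j)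
    rw [htr j] at hr
    rw [hr, hlam j, hr]
    norm_num
  -- key: lam j • rhat j = S a S when lam j ≠ 0
  have hkey : ∀ j, lam j ≠ 0 → (lam j : ℂ) • rhat j = S * a j * S := by
    intro j hj
    rw [hrhat j, smul_smul, mul_inv_cancel₀ (by exact_mod_cast hj), one_smul]
  -- when lam j = 0, S a S = 0
  have hzero : ∀ j, lam j = 0 → S * a j * S = 0 := by
    intro j hj
    obtain ⟨r, _, hr, h0⟩ := psd_trace_aux (hpsd j)
    apply h0
    have : ((r:ℝ):ℂ) = ((lam j : ℝ):ℂ) := by rw [← hr, htr j, hlam' j]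
    have : r = lam j := by exact_mod_cast this
    rw [this, hj]
  -- sqrt of inverse is inverse of sqrt
  have hSinv : S⁻¹ = hρ.inv.posSemidef.sqrt := by
    apply Matrix.PosSemidef.eq_sqrt_of_sq_eq
    · exact hρ.posSemidef.posSemidef_sqrt.inv
    · rw [pow_two, ← hSS, Matrix.mul_inv_rev]
  have hSdet : IsUnit S.det := by
    have : S.det * S.det = ρ.det := by rw [← Matrix.det_mul, hSS]
    have hρd : IsUnit ρ.det := hρ.isUnit.map (Matrix.detMonoidHom)
    rw [← this] at hρd
    exact isUnit_of_mul_isUnit_left hρd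
  have hTS : hρ.inv.posSemidef.sqrt * S = 1 := by rw [← hSinv, Matrix.nonsing_inv_mul _ hSdet]
  have hST : S * hρ.inv.posSemidef.sqrt = 1 := by rw [← hSinv, Matrix.mul_nonsing_inv _ hSdet]
  refine ⟨?_, ?_, ?_⟩
  · intro j hj
    constructor
    · rw [hrhat j]
      have : ((lam j : ℝ)⁻¹ : ℂ) = (((lam j)⁻¹ : ℝ) : ℂ) := by push_cast; ring
      rw [this]
      exact psd_smul_nonneg (hpsd j) (by positivity)
    · rw [hrhat j, Matrix.trace_smul, htr j, hlam' j, smul_eq_mul,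
        inv_mul_cancel₀ (by exact_mod_cast hj.ne')]
  · have : ∀ j, (lam j : ℂ) • rhat j = S * a j * S := by
      intro j
      rcases eq_or_ne (lam j) 0 with h | h
      · rw [hrhat j, hzero j h]; simp
      · exact hkey j h
    simp_rw [this]
    rw [← Finset.sum_mul, ← Finset.mul_sum, hsum, mul_one, hSS]
  · intro j hj
    rw [hkey j hj.ne']
    simp only [← Matrix.mul_assoc]
    rw [hTS, Matrix.one_mul, Matrix.mul_assoc, hST, Matrix.mul_one]
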